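/- Let Λ be a type, n : ℕ, and ψ : Fin n → Λ → ℂ a linearly independent family of functions. For each permutation σ ∈ Equiv.Perm (Fin n) define F_σ : (Fin n → Λ) → ℂ by F_σ(λ) = ∏_{k : Fin n} ψ k (λ (σ k)). Then the family (F_σ)_{σ ∈ Equiv.Perm (Fin n)} is linearly independent in the space of functions (Fin n → Λ) → ℂ. -/

import Mathlib

open Finset

lemma mul_indep {Λ M : Type*} {ι κ : Type*} [Fintype ι] [Fintype κ]
    (a : ι → Λ → ℂ) (b : κ → M → ℂ)
    (ha : LinearIndependent ℂ a) (hb : LinearIndependent ℂ b) :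
    LinearIndependent ℂ (fun p : ι × κ => fun x : Λ × M => a p.1 x.1 * b p.2 x.2) := by
  rw [Fintype.linearIndependent_iff]
  intro c hc p
  have key : ∀ i : ι, ∀ y : M, ∑ j, c (i, j) * b j y = 0 := by
    intro i y
    have h1 : ∀ x : Λ, ∑ i, (∑ j, c (i, j) * b j y) * a i x = 0 := by
      intro x
      have := congrFun hc (x, y)
      simp only [Finset.sum_apply, Pi.smul_apply, smul_eq_mul, Pi.zero_apply] at this
      rw [Fintype.sum_prod_type] at this
      rw [← this]
      refine Finset.sum_congr rfl fun i _ => ?_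
      rw [Finset.sum_mul]
      exact Finset.sum_congr rfl fun j _ => by ring
    have := Fintype.linearIndependent_iff.mp ha (fun i => ∑ j, c (i, j) * b j y) ?_ i
    · exact this
    · funext x
      simpa using h1 x
  exact Fintype.linearIndependent_iff.mp hb (fun j => c (p.1, j))
    (funext fun y => by simpa using key p.1 y) p.2

lemma prod_indep {Λ : Type*} (n : ℕ) (ψ : Fin n → Λ → ℂ)
    (hψ : LinearIndependent ℂ ψ) (m : ℕ) :
    LinearIndependent ℂ (fun f : Fin m → Fin n =>
      fun lam : Fin m → Λ => ∏ i : Fin m, ψ (f i) (lam i)) := by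
  induction m with
  | zero =>
      apply linearIndependent_unique_iff.mpr
      intro h
      have := congrFun h (fun i => (Fin.elim0 i : Λ))
      simp at this
  | succ m ih =>
      have hmul := mul_indep ψ _ hψ ih
      -- precompose with domain equiv
      have hmap := hmul.map' (LinearEquiv.funCongrLeft ℂ ℂ
        (Fin.consEquiv fun _ : Fin (m + 1) => Λ).symm).toLinearMap (LinearEquiv.ker _)
      have := (linearIndependent_equiv (Fin.consEquiv fun _ : Fin (m + 1) => Fin n).symm).2 hmap
      convert this using 1
      funext f
      funext lam
      simp only [Function.comp, LinearEquiv.coe_coe, LinearEquiv.funCongrLeft_apply,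
        LinearMap.funLeft_apply, Fin.consEquiv, Fin.prod_univ_succ]
      rfl
      all_goals rfl

theorem permuted_products_linearIndependent {Λ : Type*} (n : ℕ) (ψ : Fin n → Λ → ℂ)
    (hψ : LinearIndependent ℂ ψ) :
    LinearIndependent ℂ (fun σ : Equiv.Perm (Fin n) =>
      (fun lam : Fin n → Λ => ∏ k : Fin n, ψ k (lam (σ k)))) := by
  have h := (prod_indep n ψ hψ n).comp (fun σ : Equiv.Perm (Fin n) => ⇑σ⁻¹)
    (fun σ τ h => by
      have : (σ⁻¹ : Equiv.Perm (Fin n)) = τ⁻¹ := Equiv.coe_fn_injective h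
      simpa using congrArg (·⁻¹) this)
  convert h using 2 with σ
  funext lam
  simp only [Function.comp]
  rw [← Equiv.prod_comp σ (fun i => ψ (σ⁻¹ i) (lam i))]
  simp
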